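/- Let 1 < k₁ ≤ k₂ < ∞ and let (h_ℓ)_{ℓ≥0} be a sequence of positive reals with h₀ ≤ 1 and k₁ ≤ h_{ℓ-1}/h_ℓ ≤ k₂ for all ℓ ≥ 1. Let α, β, γ, c₁, c₂, c₃ > 0 satisfy α ≥ ½·min(β,γ) and β > γ. Then there exists a constant C > 0, depending only on α, β, γ, c₁, c₂, c₃, k₁, k₂ and h₀, such that for every ε with 0 < ε < e^{-1} there exist a level L ∈ ℕ and positive integers N₀, …, N_L with: (i) ∑_{ℓ=0}^{L} c₂ h_ℓ^β / N_ℓ + (c₁ h_L^α)² ≤ ε², and (ii) ∑_{ℓ=0}^{L} N_ℓ · c₃ h_ℓ^{-γ} ≤ C ε^{-2}. -/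

import Mathlib

lemma geom_sum_le_inv' {r : ℝ} (h0 : 0 ≤ r) (h1 : r < 1) (n : ℕ) :
    ∑ i ∈ Finset.range n, r ^ i ≤ (1 - r)⁻¹ := by
  rw [← tsum_geometric_of_lt_one h0 h1]
  exact Summable.sum_le_tsum _ (fun i _ => pow_nonneg h0 i) (summable_geometric_of_lt_one h0 h1)

lemma pow_rpow_comm' {x : ℝ} (hx : 0 ≤ x) (n : ℕ) (e : ℝ) : ((x ^ n : ℝ)) ^ e = (x ^ e) ^ n := by
  rw [← Real.rpow_natCast x n, ← Real.rpow_mul hx, mul_comm, Real.rpow_mul hx, Real.rpow_natCast]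

set_option maxHeartbeats 1000000 in
/-- Abstract multilevel Monte Carlo complexity theorem, case β > γ. -/
theorem mlmc_complexity_beta_gt_gamma
    (k₁ k₂ : ℝ) (hk₁ : 1 < k₁) (hk₁₂ : k₁ ≤ k₂)
    (h : ℕ → ℝ) (hpos : ∀ ℓ, 0 < h ℓ) (hh0 : h 0 ≤ 1)
    (hlow : ∀ ℓ : ℕ, k₁ ≤ h ℓ / h (ℓ + 1))
    (hhigh : ∀ ℓ : ℕ, h ℓ / h (ℓ + 1) ≤ k₂)
    (α β γ c₁ c₂ c₃ : ℝ)
    (hα : 0 < α) (hβ : 0 < β) (hγ : 0 < γ)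
    (hc₁ : 0 < c₁) (hc₂ : 0 < c₂) (hc₃ : 0 < c₃)
    (hαβγ : α ≥ (1 / 2) * min β γ) (hβγ : β > γ) :
    ∃ C : ℝ, 0 < C ∧ ∀ ε : ℝ, 0 < ε → ε < Real.exp (-1) →
      ∃ (L : ℕ) (N : ℕ → ℕ), (∀ ℓ ≤ L, 0 < N ℓ) ∧
        (∑ ℓ ∈ Finset.range (L + 1), c₂ * h ℓ ^ β / (N ℓ : ℝ)) + (c₁ * h L ^ α) ^ 2 ≤ ε ^ 2 ∧
        (∑ ℓ ∈ Finset.range (L + 1), (N ℓ : ℝ) * (c₃ * h ℓ ^ (-γ))) ≤ C * ε ^ (-2 : ℝ) := by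
  have hk₁0 : (0:ℝ) < k₁ := lt_trans one_pos hk₁
  have hk₂0 : (0:ℝ) < k₂ := lt_of_lt_of_le hk₁0 hk₁₂
  have hinv0 : 0 < k₁⁻¹ := inv_pos.mpr hk₁0
  have hinv1 : k₁⁻¹ < 1 := by
    rw [inv_lt_one_iff₀]; right; exact hk₁
  have he : (0:ℝ) < (β - γ)/2 := by linarith
  -- decay of h
  have hstep : ∀ ℓ, k₁ * h (ℓ+1) ≤ h ℓ := fun ℓ => (le_div_iff₀ (hpos (ℓ+1))).mp (hlow ℓ)
  have hA : ∀ ℓ m, h (ℓ + m) * k₁ ^ m ≤ h ℓ := by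
    intro ℓ m
    induction m with
    | zero => simp
    | succ m ih =>
      have h1 : h (ℓ + (m+1)) * k₁ ≤ h (ℓ + m) := by
        show h (ℓ + m + 1) * k₁ ≤ h (ℓ + m)
        have := hstep (ℓ + m); linarith
      calc h (ℓ + (m+1)) * k₁ ^ (m+1) = (h (ℓ + (m+1)) * k₁) * k₁ ^ m := by ring
        _ ≤ h (ℓ + m) * k₁ ^ m := mul_le_mul_of_nonneg_right h1 (pow_nonneg hk₁0.le m)
        _ ≤ h ℓ := ih
  have hub : ∀ n, h n ≤ (k₁⁻¹) ^ n := by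
    intro n
    have h2 : h n * k₁ ^ n ≤ 1 := le_trans (by simpa using hA 0 n) hh0
    rw [inv_pow, ← one_div]
    exact (le_div_iff₀ (pow_pos hk₁0 n)).mpr h2
  -- geometric ratios
  set q : ℝ := (k₁⁻¹) ^ ((β - γ)/2) with hqdef
  set q' : ℝ := (k₁⁻¹) ^ γ with hq'def
  have hq0 : 0 < q := Real.rpow_pos_of_pos hinv0 _
  have hq1 : q < 1 := Real.rpow_lt_one hinv0.le hinv1 he
  have hq'0 : 0 < q' := Real.rpow_pos_of_pos hinv0 _
  have hq'1 : q' < 1 := Real.rpow_lt_one hinv0.le hinv1 hγ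
  have h1q : (0:ℝ) < 1 - q := by linarith
  have h1q' : (0:ℝ) < 1 - q' := by linarith
  set S₀ : ℝ := (1 - q)⁻¹ with hS₀def
  set T : ℝ := (1 - q')⁻¹ with hTdef
  have hS₀ : 0 < S₀ := inv_pos.mpr h1q
  have hT : 0 < T := inv_pos.mpr h1q'
  have hs2 : (0:ℝ) < Real.sqrt 2 := Real.sqrt_pos.mpr two_pos
  set Hmax : ℝ := max (h 0 ^ (-γ)) (k₂ ^ γ * (Real.sqrt 2 * c₁) ^ (γ/α)) with hHdef
  have hHmax : 0 < Hmax :=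
    lt_of_lt_of_le (Real.rpow_pos_of_pos (hpos 0) _) (le_max_left _ _)
  refine ⟨2 * S₀^2 * c₂ * c₃ + c₃ * T * Hmax, ?_, ?_⟩
  · have h1 : 0 < 2 * S₀^2 * c₂ * c₃ :=
      mul_pos (mul_pos (mul_pos two_pos (pow_pos hS₀ 2)) hc₂) hc₃
    have h2 : 0 < c₃ * T * Hmax := mul_pos (mul_pos hc₃ hT) hHmax
    linarith
  intro ε hε hεe
  have hε1 : ε < 1 := by
    have h1 : Real.exp (-1) < 1 := by
      calc Real.exp (-1) < Real.exp 0 := Real.exp_lt_exp.mpr (by norm_num)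
        _ = 1 := Real.exp_zero
    linarith
  have hε2 : (0:ℝ) < ε^2 := by positivity
  have hεr : ε ^ (-2:ℝ) = (ε^2)⁻¹ := by
    rw [show (-2:ℝ) = -(2:ℕ) by norm_num, Real.rpow_neg hε.le, Real.rpow_natCast]
  -- choice of L
  have hex : ∃ n, c₁ * h n ^ α ≤ ε / Real.sqrt 2 := by
    have hδ0 : (0:ℝ) < (ε / (Real.sqrt 2 * c₁)) ^ (α⁻¹) :=
      Real.rpow_pos_of_pos (by positivity) _
    obtain ⟨n, hn⟩ := exists_pow_lt_of_lt_one hδ0 hinv1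
    refine ⟨n, ?_⟩
    have hhn : h n ≤ (ε / (Real.sqrt 2 * c₁)) ^ (α⁻¹) := ((hub n).trans_lt hn).le
    have h3 : h n ^ α ≤ ((ε / (Real.sqrt 2 * c₁)) ^ (α⁻¹)) ^ α :=
      Real.rpow_le_rpow (hpos n).le hhn hα.le
    rw [Real.rpow_inv_rpow (by positivity) hα.ne'] at h3
    calc c₁ * h n ^ α ≤ c₁ * (ε / (Real.sqrt 2 * c₁)) :=
          mul_le_mul_of_nonneg_left h3 hc₁.le
      _ = ε / Real.sqrt 2 := by field_simp
  set L : ℕ := Nat.find hex with hLdef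
  have hLspec : c₁ * h L ^ α ≤ ε / Real.sqrt 2 := Nat.find_spec hex
  have hbias : (c₁ * h L ^ α) ^ 2 ≤ ε^2 / 2 := by
    have h0' : 0 ≤ c₁ * h L ^ α := mul_nonneg hc₁.le (Real.rpow_nonneg (hpos L).le _)
    calc (c₁ * h L ^ α)^2 ≤ (ε / Real.sqrt 2)^2 := by
          apply pow_le_pow_left₀ h0' hLspec
      _ = ε^2 / 2 := by
          rw [div_pow, Real.sq_sqrt (by norm_num : (0:ℝ) ≤ 2)]
  -- choice of N
  have hqℓ : ∀ ℓ : ℕ, h ℓ ^ ((β-γ)/2) ≤ q ^ ℓ := by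
    intro ℓ
    calc h ℓ ^ ((β-γ)/2) ≤ ((k₁⁻¹)^ℓ : ℝ) ^ ((β-γ)/2) :=
          Real.rpow_le_rpow (hpos ℓ).le (hub ℓ) he.le
      _ = q ^ ℓ := pow_rpow_comm' hinv0.le ℓ _
  set arg : ℕ → ℝ := fun ℓ => 2 * S₀ * c₂ * h ℓ ^ ((β+γ)/2) / ε^2 with hargdef
  have hargval : ∀ ℓ, arg ℓ = 2 * S₀ * c₂ * h ℓ ^ ((β+γ)/2) / ε^2 := fun ℓ => rfl
  have hargpos : ∀ ℓ, 0 < arg ℓ := by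
    intro ℓ
    rw [hargval]
    have h1 := Real.rpow_pos_of_pos (hpos ℓ) ((β+γ)/2)
    have h2 : 0 < 2 * S₀ * c₂ * h ℓ ^ ((β+γ)/2) :=
      mul_pos (mul_pos (mul_pos two_pos hS₀) hc₂) h1
    exact div_pos h2 hε2
  refine ⟨L, fun ℓ => ⌈arg ℓ⌉₊, fun ℓ _ => Nat.ceil_pos.mpr (hargpos ℓ), ?_, ?_⟩
  · -- variance bound
    have hvterm : ∀ ℓ : ℕ, c₂ * h ℓ ^ β / (⌈arg ℓ⌉₊ : ℝ) ≤ ε^2 * (1-q) / 2 * q ^ ℓ := by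
      intro ℓ
      have hNge : arg ℓ ≤ (⌈arg ℓ⌉₊ : ℝ) := Nat.le_ceil _
      have h1 : c₂ * h ℓ ^ β / (⌈arg ℓ⌉₊ : ℝ) ≤ c₂ * h ℓ ^ β / arg ℓ :=
        div_le_div_of_nonneg_left
          (mul_nonneg hc₂.le (Real.rpow_nonneg (hpos ℓ).le _)) (hargpos ℓ) hNge
      have hsplit : h ℓ ^ β = h ℓ ^ ((β+γ)/2) * h ℓ ^ ((β-γ)/2) := by
        rw [← Real.rpow_add (hpos ℓ)]; congr 1; ring
      have h2 : c₂ * h ℓ ^ β / arg ℓ = ε^2 * (1-q) / 2 * h ℓ ^ ((β-γ)/2) := by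
        rw [hargval, hS₀def, hsplit]
        have hne : h ℓ ^ ((β+γ)/2) ≠ 0 := (Real.rpow_pos_of_pos (hpos ℓ) _).ne'
        field_simp
      rw [h2] at h1
      refine h1.trans ?_
      apply mul_le_mul_of_nonneg_left (hqℓ ℓ)
      have : (0:ℝ) ≤ ε^2 * (1-q) := mul_nonneg hε2.le h1q.le
      linarith
    have hvar : ∑ ℓ ∈ Finset.range (L+1), c₂ * h ℓ ^ β / ((⌈arg ℓ⌉₊ : ℕ) : ℝ) ≤ ε^2/2 := by
      calc ∑ ℓ ∈ Finset.range (L+1), c₂ * h ℓ ^ β / ((⌈arg ℓ⌉₊ : ℕ) : ℝ)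
          ≤ ∑ ℓ ∈ Finset.range (L+1), ε^2 * (1-q) / 2 * q ^ ℓ :=
            Finset.sum_le_sum (fun ℓ _ => hvterm ℓ)
        _ = ε^2 * (1-q) / 2 * ∑ ℓ ∈ Finset.range (L+1), q ^ ℓ := by
            rw [Finset.mul_sum]
        _ ≤ ε^2 * (1-q) / 2 * (1-q)⁻¹ := by
            apply mul_le_mul_of_nonneg_left (geom_sum_le_inv' hq0.le hq1 _)
            have : (0:ℝ) ≤ ε^2 * (1-q) := mul_nonneg hε2.le h1q.le
            linarith
        _ = ε^2/2 := by field_simp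
    linarith
  · -- cost bound
    have hcost1 : ∀ ℓ : ℕ, (⌈arg ℓ⌉₊ : ℝ) * (c₃ * h ℓ ^ (-γ)) ≤
        2 * S₀ * c₂ * c₃ * (ε^2)⁻¹ * q ^ ℓ + c₃ * h ℓ ^ (-γ) := by
      intro ℓ
      have hNle : (⌈arg ℓ⌉₊ : ℝ) ≤ arg ℓ + 1 := (Nat.ceil_lt_add_one (hargpos ℓ).le).le
      have hcγ : 0 < c₃ * h ℓ ^ (-γ) := mul_pos hc₃ (Real.rpow_pos_of_pos (hpos ℓ) _)
      have h1 : (⌈arg ℓ⌉₊ : ℝ) * (c₃ * h ℓ ^ (-γ)) ≤ (arg ℓ + 1) * (c₃ * h ℓ ^ (-γ)) :=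
        mul_le_mul_of_nonneg_right hNle hcγ.le
      rw [add_mul, one_mul] at h1
      have hsplit : h ℓ ^ ((β+γ)/2) * h ℓ ^ (-γ) = h ℓ ^ ((β-γ)/2) := by
        rw [← Real.rpow_add (hpos ℓ)]; congr 1; ring
      have h2 : arg ℓ * (c₃ * h ℓ ^ (-γ)) = 2 * S₀ * c₂ * c₃ * (ε^2)⁻¹ * h ℓ ^ ((β-γ)/2) := by
        rw [hargval, ← hsplit]; field_simp
      have h3 : arg ℓ * (c₃ * h ℓ ^ (-γ)) ≤ 2 * S₀ * c₂ * c₃ * (ε^2)⁻¹ * q ^ ℓ := by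
        rw [h2]
        apply mul_le_mul_of_nonneg_left (hqℓ ℓ)
        exact le_of_lt (mul_pos (mul_pos (mul_pos (mul_pos two_pos hS₀) hc₂) hc₃)
          (inv_pos.mpr hε2))
      linarith
    -- bound on h L ^ (-γ)
    have hεinv1 : (1:ℝ) ≤ (ε^2)⁻¹ := by
      rw [one_le_inv₀ hε2]; nlinarith
    have hhL : h L ^ (-γ) ≤ Hmax * (ε^2)⁻¹ := by
      rcases Nat.eq_zero_or_pos L with hL0 | hL0
      · rw [hL0]
        calc h 0 ^ (-γ) ≤ Hmax := le_max_left _ _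
          _ ≤ Hmax * (ε^2)⁻¹ := le_mul_of_one_le_right hHmax.le hεinv1
      · obtain ⟨M, hM⟩ := Nat.exists_eq_succ_of_ne_zero hL0.ne'
        have hnot : ε / Real.sqrt 2 < c₁ * h M ^ α := by
          have h1 := Nat.find_min hex (show M < L by omega)
          push_neg at h1; exact h1
        have hu0 : (0:ℝ) < ε / (Real.sqrt 2 * c₁) := by positivity
        have hu : ε / (Real.sqrt 2 * c₁) < h M ^ α := by
          rw [div_mul_eq_div_div]
          exact (div_lt_iff₀' hc₁).mpr (by linarith)
        have hγ2 : γ / α ≤ 2 := by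
          have hmin : min β γ = γ := min_eq_right hβγ.le
          rw [hmin] at hαβγ
          rw [div_le_iff₀ hα]; linarith
        have hMγ : h M ^ (-γ) ≤ (ε / (Real.sqrt 2 * c₁)) ^ (-(γ/α)) := by
          have h1 : (h M ^ α) ^ (-(γ/α)) ≤ (ε / (Real.sqrt 2 * c₁)) ^ (-(γ/α)) :=
            Real.rpow_le_rpow_of_nonpos hu0 hu.le (neg_nonpos.mpr (div_nonneg hγ.le hα.le))
          rwa [← Real.rpow_mul (hpos M).le, show α * -(γ/α) = -γ by field_simp] at h1
        have hsplit : (ε / (Real.sqrt 2 * c₁)) ^ (-(γ/α)) =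
            ε ^ (-(γ/α)) * (Real.sqrt 2 * c₁) ^ (γ/α) := by
          rw [Real.div_rpow hε.le (by positivity),
            Real.rpow_neg (by positivity : (0:ℝ) ≤ Real.sqrt 2 * c₁)]
          field_simp
        have hεexp : ε ^ (-(γ/α)) ≤ (ε^2)⁻¹ := by
          rw [← hεr]
          exact Real.rpow_le_rpow_of_exponent_ge hε hε1.le (by linarith)
        have hMγ' : h M ^ (-γ) ≤ (Real.sqrt 2 * c₁) ^ (γ/α) * (ε^2)⁻¹ := by
          rw [hsplit] at hMγ
          calc h M ^ (-γ) ≤ ε ^ (-(γ/α)) * (Real.sqrt 2 * c₁) ^ (γ/α) := hMγ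
            _ ≤ (ε^2)⁻¹ * (Real.sqrt 2 * c₁) ^ (γ/α) :=
                mul_le_mul_of_nonneg_right hεexp (Real.rpow_nonneg (by positivity) _)
            _ = (Real.sqrt 2 * c₁) ^ (γ/α) * (ε^2)⁻¹ := by ring
        have hLM : h M / k₂ ≤ h L := by
          rw [hM]
          have h1 := (div_le_iff₀ (hpos (M+1))).mp (hhigh M)
          rw [div_le_iff₀ hk₂0]; linarith
        have h4 : h L ^ (-γ) ≤ (h M / k₂) ^ (-γ) :=
          Real.rpow_le_rpow_of_nonpos (div_pos (hpos M) hk₂0) hLM (by linarith)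
        have h5 : (h M / k₂) ^ (-γ) = k₂ ^ γ * h M ^ (-γ) := by
          rw [Real.div_rpow (hpos M).le hk₂0.le, Real.rpow_neg (hpos M).le,
            Real.rpow_neg hk₂0.le]
          field_simp
        calc h L ^ (-γ) ≤ k₂ ^ γ * h M ^ (-γ) := by rw [← h5]; exact h4
          _ ≤ k₂ ^ γ * ((Real.sqrt 2 * c₁) ^ (γ/α) * (ε^2)⁻¹) :=
              mul_le_mul_of_nonneg_left hMγ' (Real.rpow_pos_of_pos hk₂0 _).le
          _ = (k₂ ^ γ * (Real.sqrt 2 * c₁) ^ (γ/α)) * (ε^2)⁻¹ := by ring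
          _ ≤ Hmax * (ε^2)⁻¹ :=
              mul_le_mul_of_nonneg_right (le_max_right _ _) (inv_pos.mpr hε2).le
    -- sum of h ℓ ^ (-γ)
    have hterm2 : ∀ ℓ ∈ Finset.range (L+1), h ℓ ^ (-γ) ≤ h L ^ (-γ) * q' ^ (L - ℓ) := by
      intro ℓ hℓ
      have hℓL : ℓ ≤ L := Nat.lt_succ_iff.mp (Finset.mem_range.mp hℓ)
      have h1 : h L * k₁ ^ (L - ℓ) ≤ h ℓ := by
        have h2 := hA ℓ (L - ℓ)
        rwa [Nat.add_sub_cancel' hℓL] at h2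
      have h2 : h ℓ ^ (-γ) ≤ (h L * k₁ ^ (L - ℓ)) ^ (-γ) :=
        Real.rpow_le_rpow_of_nonpos (mul_pos (hpos L) (pow_pos hk₁0 _)) h1 (by linarith)
      have h3 : ((k₁ ^ (L - ℓ) : ℝ)) ^ (-γ) = q' ^ (L - ℓ) := by
        rw [pow_rpow_comm' hk₁0.le, hq'def]
        congr 1
        rw [Real.rpow_neg hk₁0.le, ← Real.inv_rpow hk₁0.le]
      have h4 : (h L * k₁ ^ (L - ℓ)) ^ (-γ) = h L ^ (-γ) * q' ^ (L - ℓ) := by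
        rw [Real.mul_rpow (hpos L).le (pow_pos hk₁0 _).le, h3]
      rw [← h4]; exact h2
    have hsum2 : ∑ ℓ ∈ Finset.range (L+1), h ℓ ^ (-γ) ≤ h L ^ (-γ) * T := by
      calc ∑ ℓ ∈ Finset.range (L+1), h ℓ ^ (-γ)
          ≤ ∑ ℓ ∈ Finset.range (L+1), h L ^ (-γ) * q' ^ (L - ℓ) := Finset.sum_le_sum hterm2
        _ = h L ^ (-γ) * ∑ ℓ ∈ Finset.range (L+1), q' ^ (L - ℓ) := by rw [Finset.mul_sum]
        _ = h L ^ (-γ) * ∑ ℓ ∈ Finset.range (L+1), q' ^ ℓ := by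
            congr 1
            have h6 := Finset.sum_range_reflect (fun j => q' ^ j) (L+1)
            simpa using h6
        _ ≤ h L ^ (-γ) * T := by
            rw [hTdef]
            exact mul_le_mul_of_nonneg_left (geom_sum_le_inv' hq'0.le hq'1 _)
              (Real.rpow_nonneg (hpos L).le _)
    have hgeomq : ∑ ℓ ∈ Finset.range (L+1), q ^ ℓ ≤ S₀ := geom_sum_le_inv' hq0.le hq1 _
    have hcoef : (0:ℝ) ≤ 2 * S₀ * c₂ * c₃ * (ε^2)⁻¹ :=
      le_of_lt (mul_pos (mul_pos (mul_pos (mul_pos two_pos hS₀) hc₂) hc₃) (inv_pos.mpr hε2))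
    calc ∑ ℓ ∈ Finset.range (L+1), ((⌈arg ℓ⌉₊ : ℕ) : ℝ) * (c₃ * h ℓ ^ (-γ))
        ≤ ∑ ℓ ∈ Finset.range (L+1), (2 * S₀ * c₂ * c₃ * (ε^2)⁻¹ * q ^ ℓ + c₃ * h ℓ ^ (-γ)) :=
          Finset.sum_le_sum (fun ℓ _ => hcost1 ℓ)
      _ = 2 * S₀ * c₂ * c₃ * (ε^2)⁻¹ * (∑ ℓ ∈ Finset.range (L+1), q ^ ℓ)
          + c₃ * ∑ ℓ ∈ Finset.range (L+1), h ℓ ^ (-γ) := by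
          rw [Finset.sum_add_distrib, Finset.mul_sum, Finset.mul_sum]
      _ ≤ 2 * S₀ * c₂ * c₃ * (ε^2)⁻¹ * S₀ + c₃ * (h L ^ (-γ) * T) :=
          add_le_add (mul_le_mul_of_nonneg_left hgeomq hcoef)
            (mul_le_mul_of_nonneg_left hsum2 hc₃.le)
      _ ≤ 2 * S₀ * c₂ * c₃ * (ε^2)⁻¹ * S₀ + c₃ * (Hmax * (ε^2)⁻¹ * T) :=
          add_le_add_right (mul_le_mul_of_nonneg_left
            (mul_le_mul_of_nonneg_right hhL hT.le) hc₃.le) _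
      _ = (2 * S₀^2 * c₂ * c₃ + c₃ * T * Hmax) * (ε^2)⁻¹ := by ring
      _ = (2 * S₀^2 * c₂ * c₃ + c₃ * T * Hmax) * ε ^ (-2:ℝ) := by rw [hεr]
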